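/- Let H be a finite group with O_{r'}(H) = O^r(H) = A, k a field of characteristic r, and V a kH-module with V^H = 0. Then the group cohomology H^n(H, V) = 0 for all n ≥ 0. -/

import Mathlib

open CategoryTheory CategoryTheory.Limits

namespace Stmt1Aux

variable {k H : Type} [Field k] [Group H] (A : Subgroup H) [Fintype ↥A]

/-- The averaging operator over the subgroup `A`. -/
noncomputable def avg (W : Rep k H) : W →ₗ[k] W :=
  (Nat.card ↥A : k)⁻¹ • ∑ a : ↥A, W.ρ (a : H)

lemma avg_apply (W : Rep k H) (v : W) :
    avg A W v = (Nat.card ↥A : k)⁻¹ • ∑ a : ↥A, W.ρ (a : H) v := by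
  simp [avg]

lemma avg_comm_apply [A.Normal] (W : Rep k H) (g : H) (v : W) :
    avg A W (W.ρ g v) = W.ρ g (avg A W v) := by
  rw [avg_apply, avg_apply, map_smul, map_sum]
  congr 1
  have : ∀ a : ↥A, W.ρ ((a : H)) (W.ρ g v) = W.ρ ((a : H) * g) v := by
    intro a; rw [map_mul]; rfl
  simp_rw [this]
  have : ∀ a : ↥A, W.ρ g (W.ρ ((a : H)) v) = W.ρ (g * (a : H)) v := by
    intro a; rw [map_mul]; rfl
  simp_rw [this]
  refine (Fintype.sum_equiv (MulAut.conjNormal g).toEquiv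
    (fun a => W.ρ (g * (a : H)) v) (fun a => W.ρ ((a : H) * g) v) ?_).symm
  intro a
  show W.ρ (g * (a : H)) v = W.ρ ((((MulAut.conjNormal g) a : ↥A) : H) * g) v
  rw [MulAut.conjNormal_apply]
  have harg : g * (a : H) * g⁻¹ * g = g * (a : H) := by group
  rw [harg]

/-- The averaging operator as a morphism in `Rep k H`. -/
noncomputable def avgHom [A.Normal] (W : Rep k H) : W ⟶ W :=
  ConcreteCategory.ofHom (C := Rep k H)
    (LinearMap.intertwiningMap_of_isIntertwiningMap (ρ := W.ρ) (σ := W.ρ) (f := avg A W)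
      (fun g v => avg_comm_apply A W g v))

lemma avgHom_naturality [A.Normal] {W W' : Rep k H} (f : W ⟶ W') :
    avgHom A W ≫ f = f ≫ avgHom A W' := by
  ext v
  show f.hom (avg A W v) = avg A W' (f.hom v)
  rw [avg_apply, avg_apply, map_smul, map_sum]
  congr 1
  exact Finset.sum_congr rfl fun a _ => Rep.hom_comm_apply f _ v

lemma avgHom_of_trivial [A.Normal] (W : Rep k H)
    (hc : (Nat.card ↥A : k) ≠ 0) (h : ∀ a : ↥A, W.ρ (a : H) = 1) :
    avgHom A W = 𝟙 W := by
  ext v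
  show avg A W v = v
  rw [avg_apply]
  simp only [h]
  rw [Finset.sum_const, Finset.card_univ, ← Nat.card_eq_fintype_card]
  rw [← Nat.cast_smul_eq_nsmul k, smul_smul, inv_mul_cancel₀ hc]
  simp

lemma avg_mem_fixed [A.Normal] (W : Rep k H) (v : W) (b : ↥A) :
    W.ρ (b : H) (∑ a : ↥A, W.ρ (a : H) v) = ∑ a : ↥A, W.ρ (a : H) v := by
  rw [map_sum]
  have : ∀ a : ↥A, W.ρ ((b : H)) (W.ρ ((a : H)) v) = W.ρ (((b * a : ↥A) : H)) v := by
    intro a; rw [Subgroup.coe_mul, map_mul]; rfl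
  simp_rw [this]
  exact Fintype.sum_equiv (Equiv.mulLeft b) _ _ fun a => rfl

lemma avgHom_eq_zero [A.Normal] (W : Rep k H)
    (h : ∀ w : W, (∀ a : ↥A, W.ρ (a : H) w = w) → w = 0) :
    avgHom A W = 0 := by
  ext v
  show avg A W v = 0
  rw [avg_apply]
  have : (∑ a : ↥A, W.ρ (a : H) v) = 0 :=
    h _ fun b => avg_mem_fixed A W v b
  rw [this, smul_zero]

/-- The key fixed-point lemma: if invariants of `H` vanish and `H/A` is an `r`-group,
then the `A`-fixed points vanish. -/
theorem fixed_eq_zero {r : ℕ} [Fact r.Prime] [CharP k r] [Finite H] [A.Normal]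
    (V : Rep k H) (hA3 : ∃ m : ℕ, A.index = r ^ m)
    (hV : Representation.invariants V.ρ = ⊥) :
    ∀ v : V, (∀ a : ↥A, V.ρ (a : H) v = v) → v = 0 := by
  intro v hv
  by_contra hv0
  letI : Module (ZMod r) V := Module.compHom _ (ZMod.castHom (dvd_refl r) k)
  have hsmul : ∀ (c : ZMod r) (x : V), c • x = (ZMod.castHom (dvd_refl r) k c) • x :=
    fun _ _ => rfl
  set S : Set V := Set.range fun h : H => V.ρ h v with hS
  set U : Submodule (ZMod r) V := Submodule.span (ZMod r) S with hU
  -- U is stable under the action of H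
  have hmap : ∀ (g : H) (x : V), x ∈ U → V.ρ g x ∈ U := by
    intro g x hx
    refine Submodule.span_induction ?_ ?_ ?_ ?_ hx
    · rintro x ⟨h, rfl⟩
      refine Submodule.subset_span ⟨g * h, ?_⟩
      simp [map_mul]
    · simp
    · intro x y _ _ hx hy
      rw [map_add]; exact U.add_mem hx hy
    · intro c x _ hx
      rw [hsmul, map_smul, ← hsmul]
      exact U.smul_mem c hx
  -- every element of U is fixed by A
  have hfix : ∀ x ∈ U, ∀ a : ↥A, V.ρ (a : H) x = x := by
    intro x hx
    refine Submodule.span_induction ?_ ?_ ?_ ?_ hx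
    · rintro x ⟨h, rfl⟩ a
      have h1 : V.ρ ((a : H)) (V.ρ h v) = V.ρ ((a : H) * h) v := by rw [map_mul]; rfl
      have h2 : (a : H) * h = h * (h⁻¹ * (a : H) * h⁻¹⁻¹) := by group
      have hmem : h⁻¹ * (a : H) * h⁻¹⁻¹ ∈ A := ‹A.Normal›.conj_mem _ a.2 h⁻¹
      rw [h1, h2, map_mul]
      have : V.ρ (h⁻¹ * (a : H) * h⁻¹⁻¹) v = v := hv ⟨_, hmem⟩
      rw [Module.End.mul_apply, this]
    · intro a; rw [map_zero]
    · intro x y _ _ hx hy a; rw [map_add, hx, hy]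
    · intro c x _ hx a
      rw [hsmul, map_smul, hx]
  letI : MulAction H ↥U :=
    { smul := fun g u => ⟨V.ρ g u, hmap g u u.2⟩
      one_smul := fun u => Subtype.ext (show V.ρ (1 : H) ↑u = ↑u by simp)
      mul_smul := fun g h u => Subtype.ext
        (show V.ρ (g * h) ↑u = V.ρ g (V.ρ h ↑u) by rw [map_mul]; rfl) }
  have hsmul_def : ∀ (g : H) (u : ↥U), (g • u : ↥U) = ⟨V.ρ g u, hmap g u u.2⟩ :=
    fun _ _ => rfl
  let ψ : H ⧸ A →* Function.End ↥U :=
    QuotientGroup.lift A MulAction.toEndHom (by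
      intro a ha
      funext u
      show (a • u : ↥U) = u
      rw [hsmul_def]
      exact Subtype.ext (hfix u u.2 ⟨a, ha⟩))
  letI : MulAction (H ⧸ A) ↥U := MulAction.ofEndHom ψ
  have hq_smul : ∀ (g : H) (u : ↥U),
      ((QuotientGroup.mk g : H ⧸ A) • u : ↥U) = ⟨V.ρ g u, hmap g u u.2⟩ :=
    fun g u => rfl
  haveI : Module.Finite (ZMod r) ↥U :=
    Module.Finite.span_of_finite _ (Set.finite_range _)
  haveI : Finite ↥U := Module.finite_of_finite (ZMod r)
  have hP : IsPGroup r (H ⧸ A) := by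
    obtain ⟨m, hm⟩ := hA3
    exact IsPGroup.of_card (by rw [← Subgroup.index_eq_card, hm])
  have hv_mem : v ∈ U := Submodule.subset_span ⟨1, by simp⟩
  have hrdvd : r ∣ Nat.card ↥U := by
    have h0 : (⟨v, hv_mem⟩ : ↥U) ≠ 0 := by
      intro h; exact hv0 (congrArg Subtype.val h)
    have hord : addOrderOf (⟨v, hv_mem⟩ : ↥U) = r := by
      refine addOrderOf_eq_prime ?_ h0
      refine Subtype.ext ?_
      show (r : ℕ) • v = (0 : V)
      rw [← Nat.cast_smul_eq_nsmul k, CharP.cast_eq_zero, zero_smul]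
    have := addOrderOf_dvd_natCard (⟨v, hv_mem⟩ : ↥U)
    rwa [hord] at this
  have h0fix : (0 : ↥U) ∈ MulAction.fixedPoints (H ⧸ A) ↥U := by
    intro q
    induction q using QuotientGroup.induction_on with
    | H g => rw [hq_smul]; exact Subtype.ext (by simp)
  obtain ⟨b, hb, hb0⟩ :=
    hP.exists_fixed_point_of_prime_dvd_card_of_fixed_point (↥U) hrdvd h0fix
  have hbinv : (b : V) ∈ Representation.invariants V.ρ := by
    intro g
    have := hb (QuotientGroup.mk g)
    rw [hq_smul] at this
    exact congrArg Subtype.val this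
  rw [hV] at hbinv
  exact hb0 (Subtype.ext hbinv.symm)

end Stmt1Aux

open Stmt1Aux

/-- Let `H` be a finite group with `O_{r'}(H) = O^r(H) = A`, `k` a field of
characteristic `r`, and `V` a `kH`-module with `V^H = 0`. Then `H^n(H, V) = 0` for all
`n ≥ 0`. -/
theorem stmt1 {r : ℕ} [Fact r.Prime] {k H : Type} [Field k] [CharP k r] [Group H] [Finite H]
    (V : Rep k H) [FiniteDimensional k V]
    (A : Subgroup H) (hAnormal : A.Normal)
    (hA1 : ¬ r ∣ Nat.card A)
    (hA2 : ∀ N : Subgroup H, N.Normal → ¬ r ∣ Nat.card N → N ≤ A)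
    (hA3 : ∃ m : ℕ, A.index = r ^ m)
    (hA4 : ∀ N : Subgroup H, N.Normal → (∃ m : ℕ, N.index = r ^ m) → A ≤ N)
    (hV : Representation.invariants V.ρ = ⊥) :
    ∀ n : ℕ, CategoryTheory.Limits.IsZero (groupCohomology V n) := by
  intro n
  haveI := hAnormal
  haveI : Fintype ↥A := Fintype.ofFinite _
  have hcard : (Nat.card ↥A : k) ≠ 0 := by
    rw [Ne, CharP.cast_eq_zero_iff k r]
    exact hA1
  set P := Rep.standardResolution k H with hP
  -- the averaging chain map on the resolution
  let η : P.complex ⟶ P.complex :=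
    { f := fun i => avgHom A (P.complex.X i)
      comm' := fun i j _ => avgHom_naturality A (P.complex.d i j) }
  -- avgHom on V is zero
  have havgV : avgHom A V = 0 := avgHom_eq_zero A V (fixed_eq_zero A V hA3 hV)
  have hkill : ∀ (W : Rep k H) (φ : W ⟶ V), avgHom A W ≫ φ = 0 := by
    intro W φ
    rw [avgHom_naturality, havgV, CategoryTheory.Limits.comp_zero]
  -- η is a lift of the identity, hence homotopic to the identity
  have hηπ : η ≫ P.π = P.π ≫ (ChainComplex.single₀ (Rep k H)).map (𝟙 _) := by
    rw [CategoryTheory.Functor.map_id, CategoryTheory.Category.comp_id]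
    refine HomologicalComplex.hom_ext _ _ fun i => ?_
    match i with
    | 0 =>
      show η.f 0 ≫ P.π.f 0 = P.π.f 0
      have : η.f 0 = avgHom A (P.complex.X 0) := rfl
      rw [this, avgHom_naturality]
      have : avgHom A (((ChainComplex.single₀ (Rep k H)).obj (Rep.trivial k H k)).X 0) = 𝟙 _ :=
        avgHom_of_trivial A _ hcard (fun a => rfl)
      rw [this, CategoryTheory.Category.comp_id]
    | (i + 1) =>
      exact (HomologicalComplex.isZero_single_obj_X
        (ComplexShape.down ℕ) 0 (Rep.trivial k H k) (i + 1) (by simp)).eq_of_tgt _ _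
  have ht : Homotopy (𝟙 P.complex) η :=
    CategoryTheory.ProjectiveResolution.liftHomotopy (𝟙 (Rep.trivial k H k)) _ _
      (by simp) hηπ
  -- transfer to the Hom-complex
  set K := P.complex.linearYonedaObj k V with hK
  let hom : ∀ i j, K.X i ⟶ K.X j := fun i j =>
    ModuleCat.ofHom (CategoryTheory.Linear.leftComp k V (ht.hom j i))
  have hoK : Homotopy (𝟙 K) 0 :=
    { hom := hom
      zero := by
        intro i j hij
        have : ht.hom j i = 0 := ht.zero j i (by
          intro h
          exact hij h)
        show ModuleCat.ofHom (CategoryTheory.Linear.leftComp k V (ht.hom j i)) = 0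
        rw [this]
        refine ModuleCat.hom_ext (LinearMap.ext fun φ => ?_)
        rw [ModuleCat.hom_zero, LinearMap.zero_apply]
        show (0 : P.complex.X j ⟶ P.complex.X i) ≫ φ = 0
        exact CategoryTheory.Limits.zero_comp
      comm := by
        intro i
        have hcomm := ht.comm i
        rw [dNext_nat, prevD_eq (f := ht.hom) (j := i) (j' := i + 1) rfl] at hcomm
        rw [dNext_eq (f := hom) (i := i) (i' := i + 1) rfl, prevD_nat]
        refine ModuleCat.hom_ext (LinearMap.ext fun φ => ?_)
        have hKd : ∀ a b (ψ : ↑(K.X a)), K.d a b ψ = P.complex.d b a ≫ ψ := fun a b ψ => rfl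
        have e1 : (K.d i (i + 1) ≫ hom (i + 1) i) φ
            = (ht.hom i (i + 1) ≫ P.complex.d (i + 1) i) ≫ φ := by
          show hom (i + 1) i (K.d i (i + 1) φ) = _
          rw [hKd]
          show ht.hom i (i + 1) ≫ P.complex.d (i + 1) i ≫ φ = _
          exact (CategoryTheory.Category.assoc _ _ _).symm
        have e2 : (hom i (i - 1) ≫ K.d (i - 1) i) φ
            = (P.complex.d i (i - 1) ≫ ht.hom (i - 1) i) ≫ φ := by
          show K.d (i - 1) i (hom i (i - 1) φ) = _
          rw [hKd]
          show P.complex.d i (i - 1) ≫ ht.hom (i - 1) i ≫ φ = _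
          exact (CategoryTheory.Category.assoc _ _ _).symm
        have key : (P.complex.d i (i - 1) ≫ ht.hom (i - 1) i) ≫ φ
            + (ht.hom i (i + 1) ≫ P.complex.d (i + 1) i) ≫ φ = φ := by
          obtain ⟨φ, rfl⟩ : ∃ ψ : P.complex.X i ⟶ V, ψ = φ := ⟨φ, rfl⟩
          have h0 : η.f i ≫ φ = 0 := hkill _ φ
          have hc := congrArg (fun ξ : P.complex.X i ⟶ P.complex.X i => ξ ≫ φ) hcomm
          simp only [HomologicalComplex.id_f, CategoryTheory.Category.id_comp,
            CategoryTheory.Preadditive.add_comp, h0, add_zero] at hc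
          exact hc.symm
        show φ = (K.d i (i + 1) ≫ hom (i + 1) i) φ + (hom i (i - 1) ≫ K.d (i - 1) i) φ
          + ((0 : K ⟶ K).f i) φ
        rw [e1, e2, HomologicalComplex.zero_f]
        exact key.symm.trans ((add_comm _ _).trans (add_zero _).symm) }
  have hKz : IsZero (K.homology n) := by
    rw [IsZero.iff_id_eq_zero]
    have := hoK.homologyMap_eq n
    rw [HomologicalComplex.homologyMap_id, HomologicalComplex.homologyMap_zero] at this
    exact this
  exact IsZero.of_iso hKz (groupCohomologyIsoExt V n ≪≫ P.isoExt n V)
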